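/- Let G be a finite group with center Z = Z(G), and let T be an abelian subgroup of G containing Z such that C_{G/Z}(tZ) ≤ T/Z for every t ∈ T \ Z. Then C_G(t) = T for every t ∈ T \ Z; consequently every non-central element g of ⋃_{h∈G} hTh^{-1} has conjugacy class size |g^G| = |G : T|. -/

import Mathlib

/-- Let `G` be a finite group with centre `Z`, and `T` an abelian subgroup of
`G` containing `Z` such that `C_{G/Z}(tZ) ≤ T/Z` for every `t ∈ T \ Z`. Then `C_G(t) = T` for
every `t ∈ T \ Z`; consequently every non-central element `g` of `⋃_{h∈G} hTh⁻¹` has conjugacy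
class size `|g^G| = |G : T|`. -/
theorem stmt11 {G : Type*} [Group G] [Finite G] (T : Subgroup G)
    (hab : IsMulCommutative T)
    (hZT : Subgroup.center G ≤ T)
    (hCC : ∀ t ∈ T, t ∉ Subgroup.center G →
      Subgroup.centralizer {((t : G) : G ⧸ Subgroup.center G)}
        ≤ T.map (QuotientGroup.mk' (Subgroup.center G))) :
    (∀ t ∈ T, t ∉ Subgroup.center G → Subgroup.centralizer {t} = T) ∧
    (∀ g : G, g ∉ Subgroup.center G → (∃ h : G, ∃ t ∈ T, g = h * t * h⁻¹) →
      Nat.card {x : G // IsConj g x} = T.index) := by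
  have key : ∀ t ∈ T, t ∉ Subgroup.center G → Subgroup.centralizer {t} = T := by
    intro t ht htZ
    apply le_antisymm
    · intro x hx
      have hx' : t * x = x * t := Subgroup.mem_centralizer_iff.mp hx t rfl
      have hq : ((x : G ⧸ Subgroup.center G)) ∈
          Subgroup.centralizer {((t : G) : G ⧸ Subgroup.center G)} := by
        rw [Subgroup.mem_centralizer_iff]
        rintro y rfl
        have : ((t * x : G) : G ⧸ Subgroup.center G) = ((x * t : G) : _) := by rw [hx']
        simpa using this
      obtain ⟨u, hu, huv⟩ := hCC t ht htZ hq
      have hux : u⁻¹ * x ∈ Subgroup.center G := (QuotientGroup.eq).mp huv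
      have : x = u * (u⁻¹ * x) := by group
      rw [this]
      exact T.mul_mem hu (hZT hux)
    · calc T ≤ Subgroup.centralizer T := Subgroup.le_centralizer T
        _ ≤ Subgroup.centralizer {t} :=
          Subgroup.centralizer_le (Set.singleton_subset_iff.mpr ht)
  refine ⟨key, ?_⟩
  rintro g hg ⟨h, t, ht, rfl⟩
  have htZ : t ∉ Subgroup.center G := by
    intro hc
    apply hg
    have : h * t * h⁻¹ = t := by
      have := (Subgroup.mem_center_iff.mp hc h).symm
      rw [← this]; group
    rwa [this]
  have hct : Subgroup.centralizer {t} = T := key t ht htZ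
  -- centralizer of the conjugate equals comap of the centralizer along conjugation
  have hcomap : Subgroup.centralizer {h * t * h⁻¹} =
      (Subgroup.centralizer {t}).comap (MulAut.conj h⁻¹).toMonoidHom := by
    ext x
    simp only [Subgroup.mem_comap, Subgroup.mem_centralizer_iff, Set.mem_singleton_iff,
      MulEquiv.coe_toMonoidHom, MulAut.conj_apply, inv_inv]
    constructor
    · intro hx y hy
      rw [hy]
      have hthis : (h * t * h⁻¹) * x = x * (h * t * h⁻¹) := hx _ rfl
      calc t * (h⁻¹ * x * h) = h⁻¹ * ((h * t * h⁻¹) * x) * h := by group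
        _ = h⁻¹ * (x * (h * t * h⁻¹)) * h := by rw [hthis]
        _ = h⁻¹ * x * h * t := by group
    · intro hx y hy
      rw [hy]
      have hthis : t * (h⁻¹ * x * h) = h⁻¹ * x * h * t := hx _ rfl
      calc h * t * h⁻¹ * x = h * (t * (h⁻¹ * x * h)) * h⁻¹ := by group
        _ = h * (h⁻¹ * x * h * t) * h⁻¹ := by rw [hthis]
        _ = x * (h * t * h⁻¹) := by group
  -- index of centralizer of g equals T.index
  have hidx : (Subgroup.centralizer {h * t * h⁻¹}).index = T.index := by
    rw [hcomap, Subgroup.index_comap_of_surjective _ (MulAut.conj h⁻¹).surjective, hct]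
  -- conjugacy class size equals index of centralizer
  set g := h * t * h⁻¹ with hgdef
  have e1 : {x : G // IsConj g x} ≃ MulAction.orbit (ConjAct G) g :=
    Equiv.subtypeEquivRight fun x => by
      rw [ConjAct.mem_orbit_conjAct, isConj_comm]
  calc Nat.card {x : G // IsConj g x}
      = Nat.card (MulAction.orbit (ConjAct G) g) := Nat.card_congr e1
    _ = Nat.card (ConjAct G ⧸ MulAction.stabilizer (ConjAct G) g) :=
        Nat.card_congr (MulAction.orbitEquivQuotientStabilizer (ConjAct G) g)
    _ = (MulAction.stabilizer (ConjAct G) g).index := rfl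
    _ = (Subgroup.centralizer {g}).index := by
        rw [Subgroup.centralizer_eq_comap_stabilizer]
        exact (Subgroup.index_comap_of_surjective _ ConjAct.toConjAct.surjective).symm
    _ = T.index := hidx
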